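/- Let F be an algebraically closed field of characteristic zero and let n ≥ 3 be a natural number. Let Z ⊆ F^{n+1} be the set of coefficient vectors (a₀, …, a_n) such that the polynomial a_n x^n + ⋯ + a₁ x + a₀ ∈ F[x] has a root of multiplicity at least 3, i.e., is divisible by (x − r)³ for some r ∈ F. Then Z has codimension at least 2 in F^{n+1}: the Krull dimension of the quotient of the polynomial ring F[y₀, …, y_n] by the vanishing ideal of Z is at most n − 1. -/

import Mathlib

open Polynomial

section Aux
open Finset MvPolynomial

open Finset

/-- Coquand–Lombardi nested expression. -/
def nestFn {A : Type*} [CommRing A] (x : ℕ → A) (k : ℕ → ℕ) (a : ℕ → A) : ℕ → ℕ → A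
  | _, 0 => 1
  | s, len + 1 => x s ^ k s * (nestFn x k a (s + 1) len + a s * x s)

lemma nestFn_expand {A : Type*} [CommRing A] (x : ℕ → A) (k : ℕ → ℕ) (a : ℕ → A) :
    ∀ (len s : ℕ), nestFn x k a s len =
      (∏ j ∈ range len, x (s + j) ^ k (s + j)) +
      ∑ l ∈ range len,
        (∏ j ∈ range (l + 1), x (s + j) ^ k (s + j)) * (a (s + l) * x (s + l)) := by
  intro len
  induction len with
  | zero => intro s; simp [nestFn]
  | succ len ih =>
    intro s
    have hsj : ∀ j : ℕ, s + 1 + j = s + (j + 1) := fun j => by omega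
    rw [show nestFn x k a s (len + 1)
        = x s ^ k s * (nestFn x k a (s + 1) len + a s * x s) from rfl, ih (s + 1)]
    rw [Finset.prod_range_succ' (fun j => x (s + j) ^ k (s + j)) len,
      Finset.sum_range_succ' (fun l =>
        (∏ j ∈ range (l + 1), x (s + j) ^ k (s + j)) * (a (s + l) * x (s + l))) len]
    simp only [hsj, Nat.add_zero]
    have hterm : ∀ l ∈ range len,
        (∏ j ∈ range (l + 1 + 1), x (s + j) ^ k (s + j)) * (a (s + (l + 1)) * x (s + (l + 1)))
        = x s ^ k s * ((∏ j ∈ range (l + 1), x (s + (j + 1)) ^ k (s + (j + 1)))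
            * (a (s + (l + 1)) * x (s + (l + 1)))) := by
      intro l _
      rw [Finset.prod_range_succ' (fun j => x (s + j) ^ k (s + j)) (l + 1)]
      simp only [hsj, Nat.add_zero]
      ring
    rw [Finset.sum_congr rfl hterm, ← Finset.mul_sum, Finset.prod_range_one, Nat.add_zero]
    ring

lemma ringKrullDim_le_of_nest {A : Type*} [CommRing A] (m : ℕ) (hm : 0 < m)
    (H : ∀ x : ℕ → A, ∃ (k : ℕ → ℕ) (a : ℕ → A), nestFn x k a 0 m = 0) :
    ringKrullDim A ≤ ((m - 1 : ℕ) : WithBot (WithTop ℕ)) := by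
  rw [ringKrullDim, Order.krullDim]
  apply iSup_le
  intro q
  suffices hq : q.length ≤ m - 1 by exact WithBot.coe_le_coe.mpr (Nat.cast_le.mpr hq)
  by_contra hcon
  push_neg at hcon
  have hlen : m ≤ q.length := by omega
  have hex : ∀ i : ℕ, (hi : i < m) → ∃ z : A,
      z ∈ (q.toFun ⟨i + 1, by omega⟩).asIdeal ∧ z ∉ (q.toFun ⟨i, by omega⟩).asIdeal := by
    intro i hi
    have hlt : q.toFun ⟨i, by omega⟩ < q.toFun ⟨i + 1, by omega⟩ :=
      q.strictMono (by simp [Fin.lt_def])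
    obtain ⟨z, hz1, hz2⟩ := SetLike.exists_of_lt
      ((PrimeSpectrum.asIdeal_lt_asIdeal _ _).mpr hlt)
    exact ⟨z, hz1, hz2⟩
  classical
  set x : ℕ → A := fun i => if h : i < m then (hex i h).choose else 0 with hx
  obtain ⟨k, a, hnest⟩ := H x
  have claim : ∀ i : ℕ, (hi : i ≤ m) →
      nestFn x k a i (m - i) ∈ (q.toFun ⟨i, by omega⟩).asIdeal := by
    intro i
    induction i with
    | zero => intro _; simpa [hnest] using (q.toFun ⟨0, by omega⟩).asIdeal.zero_mem
    | succ i ih =>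
      intro hi
      have hi' : i < m := by omega
      have hprev := ih (by omega)
      have hrw : nestFn x k a i (m - i)
          = x i ^ k i * (nestFn x k a (i + 1) (m - (i + 1)) + a i * x i) := by
        rw [show m - i = (m - (i + 1)) + 1 by omega]
        rfl
      rw [hrw] at hprev
      have hxi := (hex i hi').choose_spec
      have hxval : x i = (hex i hi').choose := by rw [hx]; simp [hi']
      have hIprime : ((q.toFun ⟨i, by omega⟩).asIdeal).IsPrime := (q.toFun ⟨i, by omega⟩).2
      have hxnot : x i ∉ (q.toFun ⟨i, by omega⟩).asIdeal := by rw [hxval]; exact hxi.2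
      have hxin : x i ∈ (q.toFun ⟨i + 1, by omega⟩).asIdeal := by rw [hxval]; exact hxi.1
      have hsum : nestFn x k a (i + 1) (m - (i + 1)) + a i * x i
          ∈ (q.toFun ⟨i, by omega⟩).asIdeal := by
        rcases hIprime.mem_or_mem hprev with h | h
        · exact absurd (hIprime.mem_of_pow_mem _ h) hxnot
        · exact h
      have hle : (q.toFun ⟨i, by omega⟩).asIdeal ≤ (q.toFun ⟨i + 1, by omega⟩).asIdeal := by
        have := q.monotone (show (⟨i, by omega⟩ : Fin (q.length + 1)) ≤ ⟨i + 1, by omega⟩ by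
          simp [Fin.le_def])
        exact this
      have h1 : nestFn x k a (i + 1) (m - (i + 1)) + a i * x i
          ∈ (q.toFun ⟨i + 1, by omega⟩).asIdeal := hle hsum
      have h2 : a i * x i ∈ (q.toFun ⟨i + 1, by omega⟩).asIdeal :=
        (q.toFun ⟨i + 1, by omega⟩).asIdeal.mul_mem_left _ hxin
      simpa using (q.toFun ⟨i + 1, by omega⟩).asIdeal.sub_mem h1 h2
  have hone : (1 : A) ∈ (q.toFun ⟨m, by omega⟩).asIdeal := by
    have := claim m le_rfl
    simpa [Nat.sub_self, nestFn] using this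
  exact (q.toFun ⟨m, by omega⟩).2.ne_top ((Ideal.eq_top_iff_one _).mpr hone)


theorem not_algebraicIndependent_of_card {K : Type*} [Field K] {d m : ℕ} (hdm : d < m)
    (f : Fin m → MvPolynomial (Fin d) K) : ¬ AlgebraicIndependent K f := by
  classical
  intro h
  set D : ℕ := 1 + Finset.univ.sup (fun i : Fin m => (f i).totalDegree) with hD
  have hfD : ∀ i, (f i).totalDegree ≤ D := by
    intro i
    have h0 : (f i).totalDegree ≤ Finset.univ.sup (fun i : Fin m => (f i).totalDegree) := by
      simpa using Finset.le_sup (f := fun i : Fin m => (f i).totalDegree) (Finset.mem_univ i)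
    omega
  set M : ℕ := (D * m + 1) ^ d with hM
  set B : ℕ := m * M * D with hB
  set toF : (Fin m → Fin (M + 1)) → (Fin m →₀ ℕ) :=
    fun g => Finsupp.equivFunOnFinite.symm (fun j => (g j : ℕ)) with htoF
  have htoFinj : Function.Injective toF := by
    intro g1 g2 hg
    funext j
    have : ((g1 j : ℕ)) = ((g2 j : ℕ)) := by
      have := congrArg (fun φ : Fin m →₀ ℕ => φ j) hg
      simpa [htoF] using this
    exact Fin.ext this
  set e : (Fin m → Fin (M + 1)) → MvPolynomial (Fin d) K :=
    ⇑(aeval f : MvPolynomial (Fin m) K →ₐ[K] MvPolynomial (Fin d) K).toLinearMap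
      ∘ (fun g => monomial (toF g) 1) with he
  have hmono : LinearIndependent K
      (fun g : Fin m → Fin (M + 1) => (monomial (toF g) (1 : K) : MvPolynomial (Fin m) K)) := by
    have := ((MvPolynomial.basisMonomials (Fin m) K).linearIndependent).comp toF htoFinj
    exact this
  have hinj : Function.Injective (aeval f : MvPolynomial (Fin m) K →ₐ[K] MvPolynomial (Fin d) K) :=
    algebraicIndependent_iff_injective_aeval.mp h
  have hLI : LinearIndependent K e :=
    hmono.map' (aeval f : MvPolynomial (Fin m) K →ₐ[K] MvPolynomial (Fin d) K).toLinearMap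
      (LinearMap.ker_eq_bot.mpr hinj)
  have hdeg : ∀ g, (e g).totalDegree ≤ B := by
    intro g
    have he2 : e g = ∏ j : Fin m, f j ^ (g j : ℕ) := by
      rw [he]
      simp only [Function.comp_apply, AlgHom.toLinearMap_apply, MvPolynomial.aeval_monomial, map_one, one_mul]
      rw [Finsupp.prod_fintype _ _ (fun j => pow_zero _)]
      apply Finset.prod_congr rfl
      intro j _
      simp [htoF]
    rw [he2]
    calc (∏ j : Fin m, f j ^ (g j : ℕ)).totalDegree
        ≤ ∑ j : Fin m, (f j ^ (g j : ℕ)).totalDegree := totalDegree_finset_prod _ _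
      _ ≤ ∑ j : Fin m, M * D := by
          apply Finset.sum_le_sum
          intro j _
          calc (f j ^ (g j : ℕ)).totalDegree ≤ (g j : ℕ) * (f j).totalDegree :=
                totalDegree_pow _ _
            _ ≤ M * D := by
                have h1 : (g j : ℕ) ≤ M := by omega
                exact Nat.mul_le_mul h1 (hfD j)
      _ = m * M * D := by simp [Finset.sum_const, mul_assoc]
  set T : Finset (MvPolynomial (Fin d) K) :=
    Finset.image (fun g : Fin d → Fin (B + 1) =>
      (monomial (Finsupp.equivFunOnFinite.symm fun j => (g j : ℕ)) (1 : K))) Finset.univ with hT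
  have hmemT : ∀ β : Fin d →₀ ℕ, (∀ j, β j ≤ B) → (monomial β (1 : K)) ∈ T := by
    intro β hβ
    rw [hT, Finset.mem_image]
    refine ⟨fun j => ⟨β j, by have := hβ j; omega⟩, Finset.mem_univ _, ?_⟩
    congr 1
    have : (fun j => ((⟨β j, by have := hβ j; omega⟩ : Fin (B + 1)) : ℕ)) = ⇑β := rfl
    rw [this, Finsupp.equivFunOnFinite_symm_coe]
  have hspan : ∀ g, e g ∈ Submodule.span K (T : Set (MvPolynomial (Fin d) K)) := by
    intro g
    rw [MvPolynomial.as_sum (e g)]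
    apply Submodule.sum_mem
    intro β hβ
    have h1 : ∀ j, β j ≤ B := by
      intro j
      by_cases hj : β j = 0
      · omega
      · calc β j ≤ β.sum fun _ n => n :=
              Finset.single_le_sum (fun _ _ => Nat.zero_le _) (Finsupp.mem_support_iff.mpr hj)
          _ ≤ (e g).totalDegree := le_totalDegree hβ
          _ ≤ B := hdeg g
    have h2 : (monomial β (coeff β (e g)) : MvPolynomial (Fin d) K)
        = (coeff β (e g)) • monomial β 1 := by
      rw [MvPolynomial.smul_monomial, smul_eq_mul, mul_one]
    rw [h2]
    exact Submodule.smul_mem _ _ (Submodule.subset_span (hmemT β h1))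
  haveI : FiniteDimensional K (Submodule.span K (T : Set (MvPolynomial (Fin d) K))) :=
    FiniteDimensional.span_finset K T
  set v : (Fin m → Fin (M + 1)) → Submodule.span K (T : Set (MvPolynomial (Fin d) K)) :=
    fun g => ⟨e g, hspan g⟩ with hv
  have hvLI : LinearIndependent K v := by
    apply LinearIndependent.of_comp (Submodule.span K (T : Set (MvPolynomial (Fin d) K))).subtype
    exact hLI
  have hcard := hvLI.fintype_card_le_finrank
  have hcard1 : Fintype.card (Fin m → Fin (M + 1)) = (M + 1) ^ m := by
    rw [Fintype.card_fun]; simp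
  have hfr : Module.finrank K (Submodule.span K (T : Set (MvPolynomial (Fin d) K))) ≤ T.card :=
    finrank_span_finset_le_card T
  have hTcard : T.card ≤ (B + 1) ^ d := by
    calc T.card ≤ (Finset.univ : Finset (Fin d → Fin (B + 1))).card := Finset.card_image_le
      _ = (B + 1) ^ d := by rw [Finset.card_univ, Fintype.card_fun]; simp
  have hmain : (M + 1) ^ m ≤ (B + 1) ^ d := by
    calc (M + 1) ^ m = Fintype.card (Fin m → Fin (M + 1)) := hcard1.symm
      _ ≤ Module.finrank K (Submodule.span K (T : Set (MvPolynomial (Fin d) K))) := hcard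
      _ ≤ T.card := hfr
      _ ≤ (B + 1) ^ d := hTcard
  -- arithmetic contradiction
  have h2 : B + 1 ≤ (D * m + 1) * (M + 1) := by
    have h0 : (D * m + 1) * (M + 1) = D * m * M + D * m + M + 1 := by ring
    have hBe : B = m * M * D := hB
    have hcomm : m * M * D = D * m * M := by ring
    omega
  have h3 : (B + 1) ^ d ≤ M * (M + 1) ^ d := by
    calc (B + 1) ^ d ≤ ((D * m + 1) * (M + 1)) ^ d := Nat.pow_le_pow_left h2 d
      _ = (D * m + 1) ^ d * (M + 1) ^ d := mul_pow _ _ _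
      _ = M * (M + 1) ^ d := by rw [hM]
  have h4 : (M + 1) ^ (d + 1) ≤ (M + 1) ^ m := Nat.pow_le_pow_right (by omega) (by omega)
  have h5 : (M + 1) ^ (d + 1) = M * (M + 1) ^ d + (M + 1) ^ d := by ring
  have h6 : 0 < (M + 1) ^ d := Nat.pow_pos (by omega)
  omega

theorem nest_of_not_algIndep {K A : Type*} [Field K] [CommRing A] [Algebra K A]
    (m : ℕ) (x : ℕ → A)
    (h : ¬ AlgebraicIndependent K (fun i : Fin m => x (i : ℕ))) :
    ∃ (k : ℕ → ℕ) (a : ℕ → A), nestFn x k a 0 m = 0 := by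
  classical
  rw [algebraicIndependent_iff] at h
  push_neg at h
  obtain ⟨p, hp0, hpne⟩ := h
  rcases Nat.eq_zero_or_pos m with hm | hm
  · subst hm
    obtain ⟨c, rfl⟩ := MvPolynomial.C_surjective (Fin 0) p
    have hc : c ≠ 0 := fun hcc => hpne (by rw [hcc, map_zero])
    have h1 : (algebraMap K A) c = 0 := by simpa using hp0
    have h0 : (1 : A) = 0 := by
      have h2 := congrArg (fun t => (algebraMap K A) c⁻¹ * t) h1
      simpa [← map_mul, inv_mul_cancel₀ hc] using h2
    exact ⟨0, 0, by simpa [nestFn] using h0⟩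
  · set xv : Fin m → A := fun i => x (i : ℕ) with hxv
    have hsupp : p.support.Nonempty := MvPolynomial.support_nonempty.mpr hpne
    set S : Finset (Lex (Fin m →₀ ℕ)) := p.support.image toLex with hS
    have hSne : S.Nonempty := hsupp.image _
    set w : Fin m →₀ ℕ := ofLex (S.min' hSne) with hw
    have hwmem : w ∈ p.support := by
      have h1 : S.min' hSne ∈ Finset.image toLex p.support := S.min'_mem hSne
      obtain ⟨β, hβ, hβe⟩ := Finset.mem_image.mp h1
      have h2 : w = β := by
        calc w = ofLex (S.min' hSne) := hw
          _ = ofLex (toLex β) := by rw [hβe]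
          _ = β := rfl
      rw [h2]
      exact hβ
    set c : K := MvPolynomial.coeff w p with hc
    have hcne : c ≠ 0 := MvPolynomial.mem_support_iff.mp hwmem
    have hchoice : ∀ β ∈ p.support, β ≠ w →
        ∃ i : Fin m, (∀ j < i, w j = β j) ∧ w i < β i := by
      intro β hβ hne
      have hle : toLex w ≤ toLex β := S.min'_le _ (Finset.mem_image_of_mem _ hβ)
      have hlt : toLex w < toLex β :=
        lt_of_le_of_ne hle (fun hh => hne (by
          have := congrArg ofLex hh
          simpa using this.symm))
      exact Finsupp.Lex.lt_iff.mp hlt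
    set idx : (Fin m →₀ ℕ) → Fin m := fun β =>
      if hb : β ∈ p.support ∧ β ≠ w then (hchoice β hb.1 hb.2).choose else ⟨0, hm⟩ with hidx
    have hidx1 : ∀ β ∈ p.support, ∀ (_ : β ≠ w),
        (∀ j < idx β, w j = β j) ∧ w (idx β) < β (idx β) := by
      intro β h1 h2
      rw [hidx]
      simp only [dif_pos (And.intro h1 h2)]
      exact (hchoice β h1 h2).choose_spec
    set γ : Fin m → (Fin m →₀ ℕ) := fun i =>
      Finsupp.equivFunOnFinite.symm
        (fun j => if j < i then w j else if j = i then w i + 1 else 0) with hγ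
    have hγapp : ∀ i j, γ i j = if j < i then w j else if j = i then w i + 1 else 0 := by
      intro i j
      rw [hγ]
      rfl
    have hγle : ∀ β ∈ p.support, ∀ (_ : β ≠ w), γ (idx β) ≤ β := by
      intro β h1 h2
      obtain ⟨ha, hb⟩ := hidx1 β h1 h2
      rw [Finsupp.le_def]
      intro j
      rw [hγapp]
      rcases lt_trichotomy j (idx β) with hj | hj | hj
      · rw [if_pos hj, ha j hj]
      · subst hj
        rw [if_neg (lt_irrefl _), if_pos rfl]
        omega
      · rw [if_neg (not_lt_of_gt hj), if_neg (ne_of_gt hj)]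
        exact Nat.zero_le _
    set Q : Fin m → MvPolynomial (Fin m) K := fun i =>
      ∑ β ∈ (p.support.erase w).filter (fun β => idx β = i),
        MvPolynomial.monomial (β - γ i) (MvPolynomial.coeff β p) with hQ
    have hdecomp : p = MvPolynomial.monomial w c
        + ∑ i : Fin m, MvPolynomial.monomial (γ i) 1 * Q i := by
      have h1 : ∀ i : Fin m, MvPolynomial.monomial (γ i) (1 : K) * Q i
          = ∑ β ∈ (p.support.erase w).filter (fun β => idx β = i),
              MvPolynomial.monomial β (MvPolynomial.coeff β p) := by
        intro i
        rw [hQ]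
        rw [Finset.mul_sum]
        apply Finset.sum_congr rfl
        intro β hβ
        rw [Finset.mem_filter, Finset.mem_erase] at hβ
        obtain ⟨⟨hne, hmem⟩, hidxβ⟩ := hβ
        rw [MvPolynomial.monomial_mul, one_mul, ← hidxβ,
          add_tsub_cancel_of_le (hγle β hmem hne)]
      rw [Finset.sum_congr rfl (fun i _ => h1 i)]
      rw [Finset.sum_fiberwise_of_maps_to (fun β _ => Finset.mem_univ (idx β))
        (fun β => MvPolynomial.monomial β (MvPolynomial.coeff β p))]
      rw [hc, Finset.add_sum_erase p.support
        (fun β => MvPolynomial.monomial β (MvPolynomial.coeff β p)) hwmem]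
      exact MvPolynomial.as_sum p
    set mp : (Fin m →₀ ℕ) → A := fun δ => ∏ j : Fin m, xv j ^ δ j with hmp
    have haevalmono : ∀ (δ : Fin m →₀ ℕ) (r : K),
        MvPolynomial.aeval xv (MvPolynomial.monomial δ r) = algebraMap K A r * mp δ := by
      intro δ r
      rw [MvPolynomial.aeval_monomial]
      congr 1
      exact Finsupp.prod_fintype _ _ (fun j => pow_zero _)
    have hE : algebraMap K A c * mp w
        + ∑ i : Fin m, mp (γ i) * MvPolynomial.aeval xv (Q i) = 0 := by
      have h1 := congrArg (MvPolynomial.aeval xv) hdecomp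
      rw [hp0] at h1
      rw [map_add, map_sum, haevalmono] at h1
      have h2 : ∀ i : Fin m,
          MvPolynomial.aeval xv (MvPolynomial.monomial (γ i) 1 * Q i)
          = mp (γ i) * MvPolynomial.aeval xv (Q i) := by
        intro i
        rw [map_mul, haevalmono, map_one, one_mul]
      rw [Finset.sum_congr rfl (fun i _ => h2 i)] at h1
      exact h1.symm
    set kf : ℕ → ℕ := fun j => if hj : j < m then w ⟨j, hj⟩ else 0 with hkf
    set af : ℕ → A := fun l =>
      if hl : l < m then algebraMap K A c⁻¹ * MvPolynomial.aeval xv (Q ⟨l, hl⟩) else 0 with haf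
    refine ⟨kf, af, ?_⟩
    rw [nestFn_expand]
    simp only [Nat.zero_add]
    have hkfv : ∀ j : Fin m, kf (j : ℕ) = w j := by
      intro j
      rw [hkf]
      simp only [dif_pos j.isLt, Fin.eta]
    have hprod : (∏ j ∈ range m, x j ^ kf j) = mp w := by
      rw [hmp, ← Fin.prod_univ_eq_prod_range (fun j => x j ^ kf j) m]
      apply Finset.prod_congr rfl
      intro j _
      rw [hkfv j]
    have hγprod : ∀ i : Fin m,
        mp (γ i) = (∏ j ∈ range ((i : ℕ) + 1), x j ^ kf j) * x (i : ℕ) := by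
      intro i
      have e1 : mp (γ i) = ∏ j ∈ range m, x j ^
          (if j < (i : ℕ) then kf j else if j = (i : ℕ) then kf (i : ℕ) + 1 else 0) := by
        rw [hmp, ← Fin.prod_univ_eq_prod_range
          (fun j => x j ^ (if j < (i : ℕ) then kf j else if j = (i : ℕ) then kf (i : ℕ) + 1 else 0)) m]
        apply Finset.prod_congr rfl
        intro j _
        congr 1
        rw [hγapp]
        rcases lt_trichotomy j i with hj | hj | hj
        · rw [if_pos hj, if_pos (show (j : ℕ) < (i : ℕ) from hj), hkfv]
        · subst hj
          simp [hkfv]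
        · have hv : (i : ℕ) < (j : ℕ) := hj
          rw [if_neg (not_lt_of_gt hj), if_neg (ne_of_gt hj),
            if_neg (show ¬ ((j : ℕ) < (i : ℕ)) by omega),
            if_neg (show ¬ ((j : ℕ) = (i : ℕ)) by omega)]
      rw [e1, range_eq_Ico,
        ← Finset.prod_Ico_consecutive _ (Nat.zero_le ((i : ℕ) + 1)) (by omega : (i : ℕ) + 1 ≤ m)]
      have e2 : ∏ j ∈ Finset.Ico ((i : ℕ) + 1) m, x j ^
          (if j < (i : ℕ) then kf j else if j = (i : ℕ) then kf (i : ℕ) + 1 else 0) = 1 := by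
        apply Finset.prod_eq_one
        intro j hj
        rw [Finset.mem_Ico] at hj
        rw [if_neg (by omega), if_neg (by omega), pow_zero]
      rw [e2, mul_one, ← range_eq_Ico, Finset.prod_range_succ, if_neg (lt_irrefl _), if_pos rfl,
        Finset.prod_range_succ]
      have e3 : ∀ j ∈ range (i : ℕ), x j ^
          (if j < (i : ℕ) then kf j else if j = (i : ℕ) then kf (i : ℕ) + 1 else 0)
          = x j ^ kf j := by
        intro j hj
        rw [Finset.mem_range] at hj
        rw [if_pos hj]
      rw [Finset.prod_congr rfl e3, pow_succ]
      ring
    have hsum : ∑ l ∈ range m, (∏ j ∈ range (l + 1), x j ^ kf j) * (af l * x l)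
        = ∑ i : Fin m, mp (γ i) * (algebraMap K A c⁻¹ * MvPolynomial.aeval xv (Q i)) := by
      rw [← Fin.sum_univ_eq_sum_range
        (fun l => (∏ j ∈ range (l + 1), x j ^ kf j) * (af l * x l)) m]
      apply Finset.sum_congr rfl
      intro i _
      have haf' : af (i : ℕ) = algebraMap K A c⁻¹ * MvPolynomial.aeval xv (Q i) := by
        rw [haf]
        simp only [dif_pos i.isLt, Fin.eta]
      rw [haf', hγprod i]
      ring
    rw [hprod, hsum]
    have hkey : algebraMap K A c * (mp w + ∑ i : Fin m,
        mp (γ i) * (algebraMap K A c⁻¹ * MvPolynomial.aeval xv (Q i))) = 0 := by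
      rw [mul_add, Finset.mul_sum]
      have hcc : algebraMap K A c * algebraMap K A c⁻¹ = 1 := by
        rw [← map_mul, mul_inv_cancel₀ hcne, map_one]
      have h3 : ∀ i ∈ (Finset.univ : Finset (Fin m)),
          algebraMap K A c * (mp (γ i) * (algebraMap K A c⁻¹ * MvPolynomial.aeval xv (Q i)))
          = mp (γ i) * MvPolynomial.aeval xv (Q i) := by
        intro i _
        calc algebraMap K A c * (mp (γ i) * (algebraMap K A c⁻¹ * MvPolynomial.aeval xv (Q i)))
            = (algebraMap K A c * algebraMap K A c⁻¹)
              * (mp (γ i) * MvPolynomial.aeval xv (Q i)) := by ring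
          _ = mp (γ i) * MvPolynomial.aeval xv (Q i) := by rw [hcc, one_mul]
      rw [Finset.sum_congr rfl h3]
      exact hE
    have h4 := congrArg (fun t => algebraMap K A c⁻¹ * t) hkey
    simpa [← mul_assoc, ← map_mul, inv_mul_cancel₀ hcne] using h4

end Aux

lemma aeval_eq_eval' {F : Type*} [CommSemiring F] {σ : Type*} (c : σ → F)
    (g : MvPolynomial σ F) : MvPolynomial.aeval c g = MvPolynomial.eval c g := by
  induction g using MvPolynomial.induction_on <;> simp [*]


/-- Let `F` be an algebraically closed field of characteristic zero and
`n ≥ 3`.  Let `Z ⊆ F^{n+1}` be the set of coefficient vectors `(a₀, …, a_n)` such that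
`a_n xⁿ + ⋯ + a₁ x + a₀` has a root of multiplicity at least `3` (i.e. is divisible by
`(x − r)³` for some `r ∈ F`).  Then `Z` has codimension at least `2` in `F^{n+1}`: the
Krull dimension of `F[y₀, …, y_n]` modulo the vanishing ideal of `Z` is at most `n − 1`. -/
theorem triple_root_locus_codim_two (F : Type*) [Field F] [IsAlgClosed F] [CharZero F]
    (n : ℕ) (hn : 3 ≤ n)
    (Z : Set (Fin (n + 1) → F))
    (hZ : Z = {a | ∃ r : F,
      (X - C r) ^ 3 ∣ ∑ i : Fin (n + 1), C (a i) * X ^ (i : ℕ)}) :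
    ringKrullDim
        (MvPolynomial (Fin (n + 1)) F ⧸ MvPolynomial.vanishingIdeal F Z) ≤ (n - 1 : ℕ) := by
  classical
  set P : Polynomial (MvPolynomial (Fin (n - 1)) F) :=
    (Polynomial.X - Polynomial.C (MvPolynomial.X (⟨0, by omega⟩ : Fin (n - 1)))) ^ 3 *
      ∑ j : Fin (n - 2), Polynomial.C
        (MvPolynomial.X (⟨(j : ℕ) + 1, by have := j.isLt; omega⟩ : Fin (n - 1)))
        * Polynomial.X ^ (j : ℕ) with hP
  set ψ : MvPolynomial (Fin (n + 1)) F →ₐ[F] MvPolynomial (Fin (n - 1)) F :=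
    MvPolynomial.aeval (fun i : Fin (n + 1) => P.coeff (i : ℕ)) with hψ
  have hcomp : ∀ (c : Fin (n - 1) → F) (fp : MvPolynomial (Fin (n + 1)) F),
      MvPolynomial.eval c (ψ fp)
        = MvPolynomial.eval (fun i : Fin (n + 1) => MvPolynomial.eval c (P.coeff (i : ℕ))) fp := by
    intro c fp
    rw [hψ]
    calc MvPolynomial.eval c (MvPolynomial.aeval (fun i : Fin (n + 1) => P.coeff (i : ℕ)) fp)
        = MvPolynomial.aeval c (MvPolynomial.aeval (fun i : Fin (n + 1) => P.coeff (i : ℕ)) fp) :=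
          (aeval_eq_eval' c _).symm
      _ = MvPolynomial.aeval (fun i : Fin (n + 1) => MvPolynomial.aeval c (P.coeff (i : ℕ))) fp :=
          MvPolynomial.comp_aeval_apply _ _ _
      _ = MvPolynomial.eval (fun i : Fin (n + 1) => MvPolynomial.eval c (P.coeff (i : ℕ))) fp := by
          simp only [aeval_eq_eval']
  have hpacoeff : ∀ (a : Fin (n + 1) → F) (i : Fin (n + 1)),
      (∑ k : Fin (n + 1), C (a k) * X ^ (k : ℕ)).coeff (i : ℕ) = a i := by
    intro a i
    rw [Polynomial.finset_sum_coeff, Finset.sum_eq_single i]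
    · simp [Polynomial.coeff_C_mul, Polynomial.coeff_X_pow]
    · intro k _ hk
      rw [Polynomial.coeff_C_mul, Polynomial.coeff_X_pow,
        if_neg (fun h => hk (Fin.ext h.symm)), mul_zero]
    · intro h
      exact absurd (Finset.mem_univ i) h
  have hpadeg : ∀ a : Fin (n + 1) → F,
      (∑ k : Fin (n + 1), C (a k) * X ^ (k : ℕ)).natDegree ≤ n := by
    intro a
    refine le_trans (Polynomial.natDegree_sum_le _ _) ?_
    rw [Finset.fold_max_le]
    refine ⟨Nat.zero_le _, fun k _ => ?_⟩
    refine le_trans (Polynomial.natDegree_C_mul_le _ _) ?_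
    simp only [Function.comp, Polynomial.natDegree_X_pow]
    omega
  have hker : ∀ fp : MvPolynomial (Fin (n + 1)) F,
      ψ fp = 0 → fp ∈ MvPolynomial.vanishingIdeal F Z := by
    intro fp hfp
    rw [MvPolynomial.mem_vanishingIdeal_iff]
    intro a ha
    rw [hZ] at ha
    obtain ⟨r, q0, hq0⟩ := ha
    set pa : Polynomial F := ∑ k : Fin (n + 1), C (a k) * X ^ (k : ℕ) with hpa
    set q : Polynomial F := if h0 : pa = 0 then 0 else q0 with hq
    have hfac : pa = (X - C r) ^ 3 * q := by
      by_cases h0 : pa = 0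
      · rw [hq, dif_pos h0, mul_zero]
        exact h0
      · rw [hq, dif_neg h0]
        exact hq0
    have hqdeg : q.natDegree ≤ n - 3 := by
      by_cases hq0' : q = 0
      · simp [hq0']
      · have h0 : pa ≠ 0 := by
          intro hh
          rw [hq, dif_pos hh] at hq0'
          exact hq0' rfl
        have h1 : pa.natDegree = 3 + q.natDegree := by
          rw [hfac, Polynomial.natDegree_mul (pow_ne_zero _ (Polynomial.X_sub_C_ne_zero r)) hq0',
            Polynomial.natDegree_pow, Polynomial.natDegree_X_sub_C]
        have h2 : pa.natDegree ≤ n := hpadeg a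
        omega
    set c : Fin (n - 1) → F := fun i => if (i : ℕ) = 0 then r else q.coeff ((i : ℕ) - 1) with hcdef
    have hmap : P.map (MvPolynomial.eval c : MvPolynomial (Fin (n - 1)) F →+* F) = pa := by
      rw [hP, Polynomial.map_mul, Polynomial.map_pow, Polynomial.map_sub, Polynomial.map_X,
        Polynomial.map_C, MvPolynomial.eval_X, Polynomial.map_sum]
      have hc0 : c ⟨0, by omega⟩ = r := by rw [hcdef]; simp
      have hterm : ∀ j : Fin (n - 2),
          Polynomial.map (MvPolynomial.eval c : MvPolynomial (Fin (n - 1)) F →+* F)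
            (Polynomial.C (MvPolynomial.X
              (⟨(j : ℕ) + 1, by have := j.isLt; omega⟩ : Fin (n - 1)))
              * Polynomial.X ^ (j : ℕ))
          = Polynomial.C (q.coeff (j : ℕ)) * Polynomial.X ^ (j : ℕ) := by
        intro j
        rw [Polynomial.map_mul, Polynomial.map_C, Polynomial.map_pow, Polynomial.map_X,
          MvPolynomial.eval_X]
        have hcj : c ⟨(j : ℕ) + 1, by have := j.isLt; omega⟩ = q.coeff (j : ℕ) := by
          rw [hcdef]
          simp
        rw [hcj]
      rw [Finset.sum_congr rfl (fun j _ => hterm j), hc0]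
      have hqsum : ∑ j : Fin (n - 2), Polynomial.C (q.coeff (j : ℕ)) * Polynomial.X ^ (j : ℕ)
          = q := by
        have h1 : q = ∑ i ∈ Finset.range (n - 2), Polynomial.monomial i (q.coeff i) :=
          Polynomial.as_sum_range' q (n - 2) (by omega)
        rw [Fin.sum_univ_eq_sum_range (fun i => Polynomial.C (q.coeff i) * Polynomial.X ^ i)
          (n - 2)]
        conv_rhs => rw [h1]
        exact Finset.sum_congr rfl (fun i _ => Polynomial.C_mul_X_pow_eq_monomial)
      rw [hqsum]
      exact hfac.symm
    have heval : (fun i : Fin (n + 1) => MvPolynomial.eval c (P.coeff (i : ℕ))) = a := by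
      funext i
      rw [← Polynomial.coeff_map, hmap, hpa]
      exact hpacoeff a i
    rw [aeval_eq_eval', ← heval, ← hcomp c fp, hfp, map_zero]
  apply ringKrullDim_le_of_nest n (by omega)
  intro x
  have hlift : ∀ i : ℕ, ∃ y : MvPolynomial (Fin (n + 1)) F,
      Ideal.Quotient.mk (MvPolynomial.vanishingIdeal F Z) y = x i :=
    fun i => Ideal.Quotient.mk_surjective (x i)
  choose xt hxt using hlift
  apply nest_of_not_algIndep (K := F) n x
  intro hind
  rw [algebraicIndependent_iff] at hind
  have hdep := not_algebraicIndependent_of_card (K := F) (show n - 1 < n by omega)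
    (fun i : Fin n => ψ (xt (i : ℕ)))
  rw [algebraicIndependent_iff] at hdep
  push_neg at hdep
  obtain ⟨p, hp1, hp2⟩ := hdep
  apply hp2
  apply hind p
  have h1 : ψ (MvPolynomial.aeval (fun i : Fin n => xt (i : ℕ)) p) = 0 := by
    rw [MvPolynomial.comp_aeval_apply]
    exact hp1
  have h2 : MvPolynomial.aeval (fun i : Fin n => xt (i : ℕ)) p
      ∈ MvPolynomial.vanishingIdeal F Z := hker _ h1
  have h3 : MvPolynomial.aeval (fun i : Fin n => x (i : ℕ)) p
      = Ideal.Quotient.mkₐ F (MvPolynomial.vanishingIdeal F Z)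
          (MvPolynomial.aeval (fun i : Fin n => xt (i : ℕ)) p) := by
    have h4 : (fun i : Fin n => (Ideal.Quotient.mkₐ F (MvPolynomial.vanishingIdeal F Z)) (xt (i : ℕ)))
        = fun i : Fin n => x (i : ℕ) := by
      funext i
      rw [Ideal.Quotient.mkₐ_eq_mk]
      exact hxt (i : ℕ)
    rw [MvPolynomial.comp_aeval_apply, h4]
  rw [h3, Ideal.Quotient.mkₐ_eq_mk]
  exact Ideal.Quotient.eq_zero_iff_mem.mpr h2
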